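/- The number v(n) of sequences in X of weight n, and hence the number c(n) of binary words of length n avoiding xx^Rx, grows faster than any polynomial: for every d, v(n)/n^d → ∞ as n → ∞. -/

import Mathlib

/-- A binary word avoids the pattern `x xᴿ x`: no factor `u ++ u.reverse ++ u` with `u` nonempty. -/
def AvoidsP (w : List Bool) : Prop :=
  ¬ ∃ u : List Bool, u ≠ [] ∧ (u ++ u.reverse ++ u) <:+: w

/-- A binary word avoids the factors `000` and `111`. -/
def AvoidsCubes (w : List Bool) : Prop :=
  ¬ ([false, false, false] <:+: w) ∧ ¬ ([true, true, true] <:+: w)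

/-- Alternating word: a prefix of `0101…` or `1010…`. -/
def Alt (A : List Bool) : Prop := A.Chain' (· ≠ ·)

/-- Glue the blocks `A_0 a_1 a_1 A_1 a_2 a_2 ⋯ a_k a_k A_k`. -/
def glue : List (List Bool) → List Bool → List Bool
  | [], _ => []
  | [A], _ => A
  | A :: As, [] => A ++ glue As []
  | A :: As, b :: bs => A ++ [b, b] ++ glue As bs

/-- `IsFact As bs w` : `w = A_0 b_1 b_1 A_1 ⋯ b_k b_k A_k` with all `A_i` alternating. -/
def IsFact (As : List (List Bool)) (bs : List Bool) (w : List Bool) : Prop :=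
  As.length = bs.length + 1 ∧ (∀ A ∈ As, Alt A) ∧ w = glue As bs

/-- Middle and final entries of the associated sequence: `n_i = |a_i A_i a_{i+1}|`, `n_k = |a_k A_k|`. -/
def seqMid : List (List Bool) → List ℕ
  | [] => []
  | [A] => [A.length + 1]
  | A :: As => (A.length + 2) :: seqMid As

/-- The sequence `f(w) = (n_0, …, n_k)` associated to the canonical factorization. -/
def seqOf : List (List Bool) → List ℕ
  | [] => []
  | [A] => if A.isEmpty then [] else [A.length]
  | A :: As => (A.length + 1) :: seqMid As

/-- No index `j` with `d_{j-1} ≥ d_j` and `d_j ≤ d_{j+1}`. -/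
def NoValley (d : List ℕ) : Prop :=
  ∀ j : ℕ, 1 ≤ j → j + 1 < d.length →
    ¬ (d.getD (j - 1) 0 ≥ d.getD j 0 ∧ d.getD j 0 ≤ d.getD (j + 1) 0)

/-- Membership in the set `X` of sequences. -/
def InX (d : List ℕ) : Prop := (∀ x ∈ d, 0 < x) ∧ NoValley d

/-- Type 1 (strongly unimodal): strictly increasing to a unique maximum, then strictly decreasing. -/
def Type1 (d : List ℕ) : Prop :=
  (∀ x ∈ d, 0 < x) ∧ d ≠ [] ∧ ∃ j < d.length,
    (∀ i : ℕ, i + 1 ≤ j → d.getD i 0 < d.getD (i + 1) 0) ∧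
    (∀ i : ℕ, j ≤ i → i + 1 < d.length → d.getD i 0 > d.getD (i + 1) 0)

/-- Type 2: strictly increasing, two equal consecutive maximal terms, then strictly decreasing. -/
def Type2 (d : List ℕ) : Prop :=
  (∀ x ∈ d, 0 < x) ∧ ∃ j, 1 ≤ j ∧ j < d.length ∧
    d.getD (j - 1) 0 = d.getD j 0 ∧
    (∀ i : ℕ, i + 1 ≤ j - 1 → d.getD i 0 < d.getD (i + 1) 0) ∧
    (∀ i : ℕ, j ≤ i → i + 1 < d.length → d.getD i 0 > d.getD (i + 1) 0)

/-- `v n` : number of sequences in `X` of weight `n`. -/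
noncomputable def v (n : ℕ) : ℕ := Nat.card {d : List ℕ // InX d ∧ d.sum = n}

/-- A strict partition, viewed as a finite set of positive integers. -/
def StrictPartition (s : Finset ℕ) : Prop := 0 ∉ s

/-- `utilde n` : number of pairs of partitions into distinct parts of total weight `n`. -/
noncomputable def utilde (n : ℕ) : ℕ :=
  Nat.card {p : Finset ℕ × Finset ℕ //
    StrictPartition p.1 ∧ StrictPartition p.2 ∧ p.1.sum id + p.2.sum id = n}

/-- `c n` : number of binary words of length `n` avoiding `x xᴿ x`. -/
noncomputable def c (n : ℕ) : ℕ := Nat.card {w : List Bool // w.length = n ∧ AvoidsP w}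

/-- The word `(01)^n`. -/
def w01 (n : ℕ) : List Bool := (List.replicate n [false, true]).flatten

/-- The word `(10)^n`. -/
def w10 (n : ℕ) : List Bool := (List.replicate n [true, false]).flatten


open Filter



lemma sqrt_tendsto : Tendsto Nat.sqrt atTop atTop := by
  apply tendsto_atTop_atTop.mpr
  intro b
  exact ⟨b ^ 2, fun n hn => by simpa [Nat.sqrt_eq'] using Nat.sqrt_le_sqrt hn⟩

lemma geom_beats_poly (k : ℕ) :
    Tendsto (fun m : ℕ => (2 : ℝ) ^ m / ((m : ℝ) + 1) ^ k) atTop atTop := by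
  have h0 : Tendsto (fun m : ℕ => ((m : ℝ)) ^ k / 2 ^ m) atTop (nhds 0) :=
    tendsto_pow_const_div_const_pow_of_one_lt k (by norm_num)
  have h1 : Tendsto (fun m : ℕ => ((m : ℝ) + 1) ^ k / 2 ^ (m + 1)) atTop (nhds 0) := by
    have := h0.comp (tendsto_add_atTop_nat 1)
    simp only [Function.comp_def] at this
    convert this using 2 with m
    push_cast
    ring
  have h2 : Tendsto (fun m : ℕ => ((m : ℝ) + 1) ^ k / 2 ^ m) atTop (nhds 0) := by
    have := h1.const_mul (2 : ℝ)
    simp only [mul_zero] at this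
    convert this using 2 with m
    rw [pow_succ]
    field_simp
  have h3 : Tendsto (fun m : ℕ => ((m : ℝ) + 1) ^ k / 2 ^ m) atTop (nhdsWithin (0:ℝ) (Set.Ioi 0)) := by
    apply tendsto_nhdsWithin_of_tendsto_nhds_of_eventually_within _ h2
    filter_upwards with m
    exact Set.mem_Ioi.mpr (by positivity)
  have := tendsto_inv_nhdsGT_zero.comp h3
  convert this using 2 with m
  simp [Pi.inv_apply, inv_div]

lemma growth_main (F : ℕ → ℕ) (hF : ∀ n, 10 ≤ n → 2 ^ Nat.sqrt n ≤ F n) (d : ℕ) :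
    Tendsto (fun n : ℕ => (F n : ℝ) / (n : ℝ) ^ d) atTop atTop := by
  have hcomp : Tendsto (fun n : ℕ => (2 : ℝ) ^ (Nat.sqrt n) / ((Nat.sqrt n : ℝ) + 1) ^ (2 * d))
      atTop atTop := (geom_beats_poly (2 * d)).comp sqrt_tendsto
  apply tendsto_atTop_mono' _ _ hcomp
  filter_upwards [eventually_ge_atTop 10] with n hn
  have hn1 : (1 : ℕ) ≤ n := by omega
  have hb : (0 : ℝ) < ((Nat.sqrt n : ℝ) + 1) ^ (2 * d) := by positivity
  have hd : (0 : ℝ) < (n : ℝ) ^ d := by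
    have : (0:ℝ) < (n:ℝ) := by exact_mod_cast Nat.lt_of_lt_of_le (by norm_num) hn
    positivity
  apply div_le_div₀
  · positivity
  · exact_mod_cast hF n hn
  · exact hd
  · have : (n : ℝ) ≤ ((Nat.sqrt n : ℝ) + 1) ^ 2 := by
      exact_mod_cast (Nat.lt_succ_sqrt' n).le
    calc (n : ℝ) ^ d ≤ (((Nat.sqrt n : ℝ) + 1) ^ 2) ^ d := by
          apply pow_le_pow_left₀ (by positivity) this
      _ = ((Nat.sqrt n : ℝ) + 1) ^ (2 * d) := by rw [← pow_mul]

lemma finite_v (n : ℕ) : Finite {d : List ℕ // InX d ∧ d.sum = n} := by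
  apply Finite.of_injective (fun d => (⟨d.1, fun {i} hi => d.2.1.1 i hi, d.2.2⟩ : Composition n))
  intro a b h
  exact Subtype.ext (congrArg Composition.blocks h)

lemma noValley_of_pairwise {d : List ℕ} (h : d.Pairwise (· > ·)) : NoValley d := by
  intro j hj hlen hc
  have hlt : d.getD (j+1) 0 < d.getD j 0 := by
    rw [List.getD_eq_getElem _ _ hlen, List.getD_eq_getElem _ _ (by omega)]
    exact List.pairwise_iff_get.mp h ⟨j, by omega⟩ ⟨j+1, by omega⟩ (by simp)
  omega

lemma descList_sorted (S : Finset ℕ) :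
    ((S.sort (· ≤ ·)).reverse).Pairwise (· > ·) := by
  rw [List.pairwise_reverse]
  exact (Finset.sortedLT_sort S).pairwise.imp (fun h => h)

lemma descList_sum (S : Finset ℕ) : ((S.sort (· ≤ ·)).reverse).sum = S.sum id := by
  rw [List.sum_reverse, (Finset.sort_perm_toList S (· ≤ ·)).sum_eq,
    ← Finset.sum_map_toList S id, List.map_id]

lemma v_lower {n : ℕ} (hn : 10 ≤ n) : 2 ^ Nat.sqrt n ≤ v n := by
  classical
  set m := Nat.sqrt n with hm
  have := finite_v n
  -- basic bounds
  have hmm : m * m ≤ n := Nat.sqrt_le n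
  have h3m : 3 * m < n := by
    rcases le_or_gt m 3 with h | h
    · omega
    · nlinarith
  have hsum_bound : ∀ S : Finset ℕ, S ⊆ Finset.Icc 1 m → S.sum id + m < n := by
    intro S hS
    have h1 : S.sum id ≤ (Finset.range (m+1)).sum id := by
      apply Finset.sum_le_sum_of_subset
      intro x hx
      have := hS hx
      simp only [Finset.mem_Icc] at this
      simp [Finset.mem_range]; omega
    have h2 : ((Finset.range (m+1)).sum id) * 2 = (m+1) * m := by
      simpa [id] using Finset.sum_range_id_mul_two (m+1)
    nlinarith
  -- the injection
  set φ : Finset ℕ → List ℕ := fun S => (n - S.sum id) :: (S.sort (· ≤ ·)).reverse with hφ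
  have hmem : ∀ S : Finset ℕ, S ⊆ Finset.Icc 1 m → InX (φ S) ∧ (φ S).sum = n := by
    intro S hS
    have hsb := hsum_bound S hS
    have htail : ∀ x ∈ (S.sort (· ≤ ·)).reverse, 1 ≤ x ∧ x ≤ m := by
      intro x hx
      rw [List.mem_reverse, Finset.mem_sort] at hx
      have := hS hx; simpa using this
    refine ⟨⟨?_, ?_⟩, ?_⟩
    · intro x hx
      rcases List.mem_cons.mp hx with rfl | hx
      · omega
      · exact (htail x hx).1
    · apply noValley_of_pairwise
      refine List.pairwise_cons.mpr ⟨fun x hx => ?_, descList_sorted S⟩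
      have := (htail x hx).2; omega
    · have := descList_sum S
      simp only [hφ, List.sum_cons, this]
      omega
  have hinj : Set.InjOn φ {S | S ⊆ Finset.Icc 1 m} := by
    intro S1 _ S2 _ h
    have : (S1.sort (· ≤ ·)).reverse = (S2.sort (· ≤ ·)).reverse := by
      simpa [hφ] using congrArg List.tail h
    have h2 : S1.sort (· ≤ ·) = S2.sort (· ≤ ·) := by
      simpa using congrArg List.reverse this
    have := congrArg List.toFinset h2
    simpa [Finset.sort_toFinset] using this
  -- count
  have key : Nat.card {S : Finset ℕ // S ∈ (Finset.Icc 1 m).powerset} ≤ v n := by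
    apply Nat.card_le_card_of_injective
      (f := fun S => (⟨φ S.1, (hmem S.1 (Finset.mem_powerset.mp S.2)).1,
        (hmem S.1 (Finset.mem_powerset.mp S.2)).2⟩ : {d : List ℕ // InX d ∧ d.sum = n}))
    intro a b hab
    apply Subtype.ext
    exact hinj (Finset.mem_powerset.mp a.2) (Finset.mem_powerset.mp b.2)
      (congrArg Subtype.val hab)
  calc 2 ^ m = ((Finset.Icc 1 m).powerset).card := by
        simp [Finset.card_powerset]
    _ = Nat.card {S : Finset ℕ // S ∈ (Finset.Icc 1 m).powerset} := by
        rw [Nat.card_eq_finsetCard]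
    _ ≤ v n := key

def WSt (w : List Bool) (i : ℕ) : Prop :=
  i + 1 < w.length ∧ w.getD i false = w.getD (i+1) false

def abl (b : Bool) (g : ℕ) : List Bool :=
  List.ofFn (fun i : Fin g => xor b (decide (i.val % 2 = 1)))

def nxt (b : Bool) (g : ℕ) : Bool := xor b (decide ((g-1) % 2 = 1))

def mkw : Bool → List ℕ → List Bool
  | _, [] => []
  | b, g :: gs => abl b g ++ mkw (nxt b g) gs

def PS (gs : List ℕ) (t : ℕ) : ℕ := (gs.take t).sum

@[simp] lemma abl_length (b : Bool) (g : ℕ) : (abl b g).length = g := by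
  simp [abl]

@[simp] lemma mkw_length (b : Bool) (gs : List ℕ) : (mkw b gs).length = gs.sum := by
  induction gs generalizing b with
  | nil => simp [mkw]
  | cons g gs ih => simp [mkw, ih]

lemma abl_getD (b : Bool) {g i : ℕ} (h : i < g) :
    (abl b g).getD i false = xor b (decide (i % 2 = 1)) := by
  rw [List.getD_eq_getElem _ _ (by simpa using h)]
  simp [abl]

lemma mkw_head (b : Bool) {g : ℕ} (gs : List ℕ) (hg : 0 < g) :
    (mkw b (g :: gs)).getD 0 false = b := by
  rw [mkw, List.getD_append _ _ _ _ (by simpa using hg), abl_getD b hg]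
  simp

lemma stutter_mkw (gs : List ℕ) (b : Bool) (hpos : ∀ g ∈ gs, 0 < g) (i : ℕ)
    (hi : i + 1 < gs.sum) :
    ((mkw b gs).getD i false = (mkw b gs).getD (i+1) false ↔
      ∃ t, 1 ≤ t ∧ t < gs.length ∧ i + 1 = PS gs t) := by
  induction gs generalizing b i with
  | nil => simp at hi
  | cons g gs ih =>
    have hg : 0 < g := hpos g (by simp)
    rcases lt_trichotomy (i+1) g with h | h | h
    · -- inside first block : no stutter
      rw [mkw, List.getD_append _ _ _ _ (by simp; omega),
        List.getD_append _ _ _ _ (by simp; omega), abl_getD b (by omega), abl_getD b (by omega)]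
      constructor
      · intro he
        exfalso
        have : (decide (i % 2 = 1)) = (decide ((i+1) % 2 = 1)) := by
          rcases b with _ | _ <;> simpa using he
        rcases Nat.even_or_odd i with he2 | he2 <;>
          simp [Nat.even_iff, Nat.odd_iff] at he2 <;>
          simp [he2, Nat.add_mod] at this <;> omega
      · rintro ⟨t, ht1, ht2, ht3⟩
        exfalso
        have : g ≤ PS (g :: gs) t := by
          rcases t with _ | t
          · omega
          · simp [PS]
        omega
    · -- junction stutter
      have hgs : gs ≠ [] := by
        rintro rfl
        simp at hi; omega
      rcases gs with _ | ⟨h2, gs'⟩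
      · exact absurd rfl hgs
      have hh2 : 0 < h2 := hpos h2 (by simp)
      rw [mkw, List.getD_append _ _ _ _ (by simp; omega),
        List.getD_append_right _ _ _ _ (by simp; omega), abl_getD b (by omega)]
      have : i + 1 - (abl b g).length = 0 := by simp; omega
      rw [this, mkw_head _ _ hh2]
      have heq : xor b (decide (i % 2 = 1)) = nxt b g := by
        have : i = g - 1 := by omega
        simp [nxt, this]
      rw [heq]
      constructor
      · intro _
        exact ⟨1, le_refl 1, by simp, by simp [PS]; omega⟩
      · intro _; rfl
    · -- inside the rest
      rw [mkw, List.getD_append_right _ _ _ _ (by simp; omega),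
        List.getD_append_right _ _ _ _ (by simp; omega)]
      have e1 : i - (abl b g).length = i - g := by simp
      have e2 : i + 1 - (abl b g).length = (i - g) + 1 := by simp; omega
      rw [e1, e2]
      have hsum : (i - g) + 1 < gs.sum := by simp at hi; omega
      rw [ih (nxt b g) (fun x hx => hpos x (by simp [hx])) _ hsum]
      constructor
      · rintro ⟨t, ht1, ht2, ht3⟩
        refine ⟨t + 1, by omega, by simp; omega, ?_⟩
        simp [PS] at ht3 ⊢
        omega
      · rintro ⟨t, ht1, ht2, ht3⟩
        rcases t with _ | t
        · omega
        refine ⟨t, ?_, by simp at ht2; omega, ?_⟩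
        · -- t ≥ 1 : if t = 0 then i + 1 = PS 1 = g, contradiction with h
          rcases Nat.eq_or_lt_of_le ht1 with h' | h'
          · exfalso
            simp [PS, ← h'] at ht3
            omega
          · omega
        · simp [PS] at ht3 ⊢
          omega

lemma PS_succ {gs : List ℕ} {t : ℕ} (h : t < gs.length) :
    PS gs (t+1) = PS gs t + gs.getD t 0 := by
  induction gs generalizing t with
  | nil => simp at h
  | cons g gs ih =>
    rcases t with _ | t
    · simp [PS]
    · simp only [PS, List.take_succ_cons, List.sum_cons] at *
      rw [ih (by simpa using h)]
      simp [List.getD_cons_succ]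
      omega

lemma PS_mono {gs : List ℕ} (hpos : ∀ g ∈ gs, 0 < g) {s t : ℕ} (h : s < t)
    (ht : t ≤ gs.length) : PS gs s < PS gs t := by
  induction t with
  | zero => omega
  | succ t ih =>
    have hPS := PS_succ (show t < gs.length by omega)
    have hget : 0 < gs.getD t 0 := by
      apply hpos
      rw [List.getD_eq_getElem _ _ (by omega)]
      exact List.getElem_mem _
    rcases Nat.lt_or_ge s t with h' | h'
    · have := ih h' (by omega); omega
    · have : s = t := by omega
      subst this; omega

lemma PS_le_sum {gs : List ℕ} (t : ℕ) : PS gs t ≤ gs.sum := by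
  simpa [PS] using List.Sublist.sum_le_sum (List.take_sublist t gs)
    (by intro x hx; positivity)

lemma PS_length {gs : List ℕ} : PS gs gs.length = gs.sum := by simp [PS]

lemma PS_lt_sum {gs : List ℕ} (hpos : ∀ g ∈ gs, 0 < g) {t : ℕ} (h : t < gs.length) :
    PS gs t < gs.sum := by
  have h1 := PS_mono hpos h (le_refl _)
  have h2 : PS gs gs.length = gs.sum := PS_length
  omega

/-- characterization of stutters of `mkw b gs` -/
lemma WSt_mkw (gs : List ℕ) (b : Bool) (hpos : ∀ g ∈ gs, 0 < g) (i : ℕ) :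
    WSt (mkw b gs) i ↔ ∃ t, 1 ≤ t ∧ t < gs.length ∧ i + 1 = PS gs t := by
  constructor
  · rintro ⟨h1, h2⟩
    rw [mkw_length] at h1
    exact (stutter_mkw gs b hpos i h1).mp h2
  · rintro ⟨t, ht1, ht2, ht3⟩
    have hlt : i + 1 < gs.sum := ht3 ▸ PS_lt_sum hpos ht2
    exact ⟨by simpa using hlt, (stutter_mkw gs b hpos i hlt).mpr ⟨t, ht1, ht2, ht3⟩⟩

def GoodGaps (gs : List ℕ) : Prop :=
  (∀ g ∈ gs, 0 < g) ∧ ∀ s, 1 ≤ s → s + 1 < gs.length → gs.getD (s+1) 0 < gs.getD s 0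

lemma PS_pos {gs : List ℕ} (hpos : ∀ g ∈ gs, 0 < g) {t : ℕ} (h1 : 1 ≤ t)
    (h2 : t ≤ gs.length) : 0 < PS gs t := by
  have := PS_mono hpos (show 0 < t by omega) h2
  simpa [PS] using this

/-- in a good-gaps word, consecutive stutters `p < q` satisfy `q + 1 = PS (s+1)`
where `p + 1 = PS s`. -/
lemma consec_stutters {gs : List ℕ} (hpos : ∀ g ∈ gs, 0 < g) {b : Bool} {p q s t : ℕ}
    (hs1 : 1 ≤ s) (hs2 : s < gs.length) (hp : p + 1 = PS gs s)
    (ht1 : 1 ≤ t) (ht2 : t < gs.length) (hq : q + 1 = PS gs t)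
    (hpq : p < q)
    (hbet : ∀ x, p < x → x < q → ¬ WSt (mkw b gs) x) : t = s + 1 := by
  have hst : s < t := by
    rcases lt_trichotomy s t with h | h | h
    · exact h
    · subst h; omega
    · have := PS_mono hpos h (by omega); omega
  by_contra hne
  have hs1t : s + 1 < t := by omega
  set x := PS gs (s+1) - 1 with hx
  have hps1 : 0 < PS gs (s+1) := PS_pos hpos (by omega) (by omega)
  have hxst : WSt (mkw b gs) x := by
    rw [WSt_mkw gs b hpos]
    exact ⟨s+1, by omega, by omega, by omega⟩
  have h1 : PS gs s < PS gs (s+1) := PS_mono hpos (by omega) (by omega)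
  have h2 : PS gs (s+1) < PS gs t := PS_mono hpos hs1t (by omega)
  exact hbet x (by omega) (by omega) hxst

lemma mkw_H1 {gs : List ℕ} (hgood : GoodGaps gs) (b : Bool) :
    ∀ p q r, WSt (mkw b gs) p → WSt (mkw b gs) q → WSt (mkw b gs) r → p < q → q < r →
      (∀ x, p < x → x < q → ¬ WSt (mkw b gs) x) →
      (∀ x, q < x → x < r → ¬ WSt (mkw b gs) x) → r - q < q - p := by
  obtain ⟨hpos, hdec⟩ := hgood
  intro p q r hp hq hr hpq hqr hbet1 hbet2
  rw [WSt_mkw gs b hpos] at hp hq hr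
  obtain ⟨s, hs1, hs2, hps⟩ := hp
  obtain ⟨t, ht1, ht2, hqt⟩ := hq
  obtain ⟨u, hu1, hu2, hru⟩ := hr
  have hts : t = s + 1 := consec_stutters hpos hs1 hs2 hps ht1 ht2 hqt hpq hbet1
  have hut : u = t + 1 := consec_stutters hpos ht1 ht2 hqt hu1 hu2 hru hqr hbet2
  have e1 : PS gs (s+1) = PS gs s + gs.getD s 0 := PS_succ (by omega)
  have e2 : PS gs (t+1) = PS gs t + gs.getD t 0 := PS_succ (by omega)
  have := hdec s hs1 (by omega)
  subst hts; subst hut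
  omega

lemma mkw_H2 {gs : List ℕ} (hgood : GoodGaps gs) (b : Bool) :
    ∀ p q, WSt (mkw b gs) p → WSt (mkw b gs) q → p < q →
      (∀ x, p < x → x < q → ¬ WSt (mkw b gs) x) →
      (∀ x, q < x → ¬ WSt (mkw b gs) x) →
      (mkw b gs).length - 1 - q < q - p := by
  obtain ⟨hpos, hdec⟩ := hgood
  intro p q hp hq hpq hbet hafter
  rw [WSt_mkw gs b hpos] at hp hq
  obtain ⟨s, hs1, hs2, hps⟩ := hp
  obtain ⟨t, ht1, ht2, hqt⟩ := hq
  have hts : t = s + 1 := consec_stutters hpos hs1 hs2 hps ht1 ht2 hqt hpq hbet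
  have hlast : t = gs.length - 1 := by
    by_contra hne
    have htl : t + 1 < gs.length := by omega
    set x := PS gs (t+1) - 1 with hx
    have h2 : PS gs t < PS gs (t+1) := PS_mono hpos (by omega) (by omega)
    have hps1 : 0 < PS gs (t+1) := PS_pos hpos (by omega) (by omega)
    have hxst : WSt (mkw b gs) x := by
      rw [WSt_mkw gs b hpos]
      exact ⟨t+1, by omega, by omega, by omega⟩
    exact hafter x (by omega) hxst
  have e1 : PS gs (s+1) = PS gs s + gs.getD s 0 := PS_succ (by omega)
  have e2 : PS gs (t+1) = PS gs t + gs.getD t 0 := PS_succ (by omega)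
  have e3 : PS gs gs.length = gs.sum := PS_length
  have e4 : t + 1 = gs.length := by omega
  rw [e4] at e2
  have hlen : (mkw b gs).length = gs.sum := mkw_length b gs
  have := hdec s hs1 (by omega)
  subst hts
  omega

lemma avoid_of_H (w : List Bool)
    (H1 : ∀ p q r, WSt w p → WSt w q → WSt w r → p < q → q < r →
      (∀ x, p < x → x < q → ¬ WSt w x) → (∀ x, q < x → x < r → ¬ WSt w x) → r - q < q - p)
    (H2 : ∀ p q, WSt w p → WSt w q → p < q → (∀ x, p < x → x < q → ¬ WSt w x) →
      (∀ x, q < x → ¬ WSt w x) → w.length - 1 - q < q - p) :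
    AvoidsP w := by
  classical
  rintro ⟨u, hu, s, t, hw⟩
  set m := u.length with hm
  have hm1 : 1 ≤ m := List.length_pos_iff.mpr hu
  set o := s.length with ho
  set y := u ++ u.reverse ++ u with hy
  have hylen : y.length = 3 * m := by simp [hy]; omega
  have hwlen : w.length = o + 3 * m + t.length := by
    rw [← hw]; simp [hy]; omega
  have yv1 : ∀ j, j < m → y.getD j false = u.getD j false := by
    intro j hj
    rw [hy, List.getD_append _ _ _ _ (by simp; omega), List.getD_append _ _ _ _ (by simpa using hj)]
  have yv2 : ∀ j, m ≤ j → j < 2*m → y.getD j false = u.getD (2*m-1-j) false := by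
    intro j hj1 hj2
    rw [hy, List.getD_append _ _ _ _ (by simp; omega), List.getD_append_right _ _ _ _ (by simpa using hj1)]
    have h1 : j - u.length < u.reverse.length := by simp; omega
    have h2 : 2*m-1-j < u.length := by omega
    rw [List.getD_eq_getElem _ _ h1, List.getD_eq_getElem _ _ h2]
    rw [List.getElem_reverse]
    congr 1
    omega
  have yv3 : ∀ j, 2*m ≤ j → j < 3*m → y.getD j false = u.getD (j - 2*m) false := by
    intro j hj1 hj2
    rw [hy, List.getD_append_right _ _ _ _ (by simp; omega)]
    congr 1
    simp; omega
  have wv : ∀ j, j < 3*m → w.getD (o + j) false = y.getD j false := by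
    intro j hj
    rw [← hw]
    rw [List.getD_append _ _ _ _ (by simp [hylen]; omega)]
    rw [List.getD_append_right s y false (o + j) (by simp [ho])]
    congr 1
    omega
  have stW : ∀ j, j + 1 < 3*m → (WSt w (o+j) ↔ y.getD j false = y.getD (j+1) false) := by
    intro j hj
    have e : o + j + 1 = o + (j + 1) := by omega
    unfold WSt
    rw [e, wv j (by omega), wv (j+1) (by omega)]
    exact ⟨fun h => h.2, fun h => ⟨by omega, h⟩⟩
  have P1 : ∀ j, j < 2*m → y.getD j false = y.getD (2*m-1-j) false := by
    intro j hj
    rcases Nat.lt_or_ge j m with h | h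
    · rw [yv1 j h, yv2 (2*m-1-j) (by omega) (by omega)]
      congr 1; omega
    · rw [yv2 j h hj, yv1 (2*m-1-j) (by omega)]
  have P2 : ∀ j, m ≤ j → j < 3*m → y.getD j false = y.getD (4*m-1-j) false := by
    intro j hj1 hj2
    rcases Nat.lt_or_ge j (2*m) with h | h
    · rw [yv2 j hj1 h, yv3 (4*m-1-j) (by omega) (by omega)]
      congr 1; omega
    · rw [yv3 j h hj2, yv2 (4*m-1-j) (by omega) (by omega)]
      congr 1; omega
  have sta : WSt w (o + (m-1)) := by
    rw [stW (m-1) (by omega)]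
    have e : m - 1 + 1 = m := by omega
    rw [e, yv1 (m-1) (by omega), yv2 m (by omega) (by omega)]
    congr 1; omega
  have stb : WSt w (o + (2*m-1)) := by
    rw [stW (2*m-1) (by omega)]
    have e : 2*m - 1 + 1 = 2*m := by omega
    rw [e, yv2 (2*m-1) (by omega) (by omega), yv3 (2*m) (by omega) (by omega)]
    congr 1; omega
  have R1 : ∀ x, o ≤ x → x + 1 ≤ o + (2*m-1) → (WSt w x → WSt w (2*o+2*m-2-x)) := by
    intro x hx1 hx2
    obtain ⟨j, rfl⟩ : ∃ j, x = o + j := ⟨x - o, by omega⟩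
    have hmir : 2*o+2*m-2-(o+j) = o + (2*m-2-j) := by omega
    rw [hmir, stW j (by omega), stW (2*m-2-j) (by omega)]
    have e1 : y.getD (2*m-2-j) false = y.getD (j+1) false := by
      have := P1 (2*m-2-j) (by omega)
      rwa [show 2*m-1-(2*m-2-j) = j+1 by omega] at this
    have e2 : y.getD (2*m-2-j+1) false = y.getD j false := by
      rw [show 2*m-2-j+1 = 2*m-1-j by omega, ← P1 j (by omega)]
    rw [e1, e2]
    exact fun h => h.symm
  have R2 : ∀ x, o + m ≤ x → x + 1 ≤ o + 3*m - 1 → (WSt w x → WSt w (2*o+4*m-2-x)) := by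
    intro x hx1 hx2
    obtain ⟨j, rfl⟩ : ∃ j, x = o + j := ⟨x - o, by omega⟩
    have hmir : 2*o+4*m-2-(o+j) = o + (4*m-2-j) := by omega
    rw [hmir, stW j (by omega), stW (4*m-2-j) (by omega)]
    have e1 : y.getD (4*m-2-j) false = y.getD (j+1) false := by
      have := P2 (4*m-2-j) (by omega) (by omega)
      rwa [show 4*m-1-(4*m-2-j) = j+1 by omega] at this
    have e2 : y.getD (4*m-2-j+1) false = y.getD j false := by
      rw [show 4*m-2-j+1 = 4*m-1-j by omega, ← P2 j (by omega) (by omega)]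
    rw [e1, e2]
    exact fun h => h.symm
  by_cases hq : ∃ x, (o + (m-1)) < x ∧ x < o + (2*m-1) ∧ WSt w x
  · obtain ⟨hq1, hq2, hq3⟩ := Nat.find_spec hq
    set q := Nat.find hq with hqdef
    have hq' : WSt w (2*o+2*m-2-q) := R1 q (by omega) (by omega) hq3
    have hbet1 : ∀ x, 2*o+2*m-2-q < x → x < o+(m-1) → ¬ WSt w x := by
      intro x h1 h2 hst
      have hmx : WSt w (2*o+2*m-2-x) := R1 x (by omega) (by omega) hst
      exact Nat.find_min hq (show 2*o+2*m-2-x < q by omega) ⟨by omega, by omega, hmx⟩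
    have hbet2 : ∀ x, o+(m-1) < x → x < q → ¬ WSt w x := fun x h1 h2 hst =>
      Nat.find_min hq h2 ⟨h1, by omega, hst⟩
    have := H1 (2*o+2*m-2-q) (o+(m-1)) q hq' sta hq3 (by omega) (by omega) hbet1 hbet2
    omega
  · simp only [not_exists, not_and] at hq
    by_cases hr : ∃ x, o + (2*m-1) < x ∧ WSt w x
    · obtain ⟨hr1, hr2⟩ := Nat.find_spec hr
      set r := Nat.find hr with hrdef
      have hrm : o + 3*m - 1 ≤ r := by
        by_contra hcon
        push_neg at hcon
        have hmx : WSt w (2*o+4*m-2-r) := R2 r (by omega) (by omega) hr2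
        exact hq (2*o+4*m-2-r) (by omega) (by omega) hmx
      have hbet3 : ∀ x, o+(2*m-1) < x → x < r → ¬WSt w x := fun x h1 h2 hst =>
        Nat.find_min hr h2 ⟨h1, hst⟩
      have := H1 (o+(m-1)) (o+(2*m-1)) r sta stb hr2 (by omega) (by omega) hq hbet3
      omega
    · simp only [not_exists, not_and] at hr
      have := H2 (o+(m-1)) (o+(2*m-1)) sta stb (by omega) hq hr
      omega

lemma sum_zero_nil {gs : List ℕ} (hpos : ∀ g ∈ gs, 0 < g) (h : gs.sum = 0) : gs = [] := by
  cases gs with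
  | nil => rfl
  | cons g gs => exfalso; have := hpos g (by simp); simp at h; omega

lemma mkw_inj {gs1 gs2 : List ℕ} (h1 : ∀ g ∈ gs1, 0 < g) (h2 : ∀ g ∈ gs2, 0 < g)
    (b : Bool) (hw : mkw b gs1 = mkw b gs2) : gs1 = gs2 := by
  have hsum : gs1.sum = gs2.sum := by
    have := congrArg List.length hw
    simpa using this
  have hEq : ∀ i, (∃ t, 1 ≤ t ∧ t < gs1.length ∧ i+1 = PS gs1 t) ↔
      (∃ t, 1 ≤ t ∧ t < gs2.length ∧ i+1 = PS gs2 t) := by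
    intro i
    rw [← WSt_mkw gs1 b h1 i, ← WSt_mkw gs2 b h2 i, hw]
  have aux : ∀ j, 1 ≤ j → j < gs1.length → j < gs2.length → PS gs1 j = PS gs2 j := by
    intro j
    induction j using Nat.strong_induction_on with
    | _ j IH =>
      intro hj1 hj2 hj3
      have le1 : PS gs2 j ≤ PS gs1 j := by
        have hpos1 : 0 < PS gs1 j := PS_pos h1 hj1 (by omega)
        obtain ⟨t, ht1, ht2, ht3⟩ := (hEq (PS gs1 j - 1)).mp ⟨j, hj1, hj2, by omega⟩
        have hgs : PS gs1 j = PS gs2 t := by omega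
        rcases Nat.lt_or_ge t j with h | h
        · exfalso
          have hIH := IH t h ht1 (by omega) ht2
          have := PS_mono h1 h (by omega)
          omega
        · rcases Nat.eq_or_lt_of_le h with h' | h'
          · subst h'; omega
          · have := PS_mono h2 h' (by omega)
            omega
      have le2 : PS gs1 j ≤ PS gs2 j := by
        have hpos2 : 0 < PS gs2 j := PS_pos h2 hj1 (by omega)
        obtain ⟨t, ht1, ht2, ht3⟩ := (hEq (PS gs2 j - 1)).mpr ⟨j, hj1, hj3, by omega⟩
        have hgs : PS gs2 j = PS gs1 t := by omega
        rcases Nat.lt_or_ge t j with h | h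
        · exfalso
          have hIH := IH t h ht1 ht2 (by omega)
          have := PS_mono h2 h (by omega)
          omega
        · rcases Nat.eq_or_lt_of_le h with h' | h'
          · subst h'; omega
          · have := PS_mono h1 h' (by omega)
            omega
      omega
  have hlen : gs1.length = gs2.length := by
    by_contra hne
    rcases Nat.lt_or_ge gs1.length gs2.length with h | h
    · rcases Nat.eq_zero_or_pos gs1.length with h0 | h0
      · have : gs1 = [] := List.length_eq_zero_iff.mp h0
        subst this
        simp at hsum
        have := sum_zero_nil h2 hsum.symm
        subst this
        simp at h
      · have hpos2 : 0 < PS gs2 gs1.length := PS_pos h2 (by omega) (by omega)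
        obtain ⟨t, ht1, ht2, ht3⟩ := (hEq (PS gs2 gs1.length - 1)).mpr
          ⟨gs1.length, by omega, h, by omega⟩
        have := aux t ht1 ht2 (by omega)
        have hmono := PS_mono h2 (show t < gs1.length by omega) (by omega)
        omega
    · rcases Nat.eq_zero_or_pos gs2.length with h0 | h0
      · have : gs2 = [] := List.length_eq_zero_iff.mp h0
        subst this
        simp at hsum
        have := sum_zero_nil h1 hsum
        subst this
        simp at hne
      · have hlt : gs2.length < gs1.length := by omega
        have hpos1 : 0 < PS gs1 gs2.length := PS_pos h1 (by omega) (by omega)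
        obtain ⟨t, ht1, ht2, ht3⟩ := (hEq (PS gs1 gs2.length - 1)).mp
          ⟨gs2.length, by omega, hlt, by omega⟩
        have := aux t ht1 (by omega) ht2
        have hmono := PS_mono h1 (show t < gs2.length by omega) (by omega)
        omega
  have hPSall : ∀ j, j ≤ gs1.length → PS gs1 j = PS gs2 j := by
    intro j hj
    rcases Nat.eq_zero_or_pos j with rfl | hj0
    · simp [PS]
    rcases Nat.eq_or_lt_of_le hj with h | h
    · subst h; rw [PS_length, hlen, PS_length, hsum]
    · exact aux j hj0 h (by omega)
  apply List.ext_getElem hlen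
  intro i hi1 hi2
  have e1 : PS gs1 (i+1) = PS gs1 i + gs1.getD i 0 := PS_succ hi1
  have e2 : PS gs2 (i+1) = PS gs2 i + gs2.getD i 0 := PS_succ hi2
  have q1 := hPSall i (by omega)
  have q2 := hPSall (i+1) (by omega)
  rw [← List.getD_eq_getElem _ 0 hi1, ← List.getD_eq_getElem _ 0 hi2]
  omega

lemma finite_c (n : ℕ) : Finite {w : List Bool // w.length = n ∧ AvoidsP w} := by
  apply Finite.of_injective (fun w => (fun i : Fin n => w.1.getD i false))
  intro w1 w2 h
  apply Subtype.ext
  apply List.ext_getElem (by rw [w1.2.1, w2.2.1])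
  intro i hi1 hi2
  have hi : i < n := w1.2.1 ▸ hi1
  have := congrFun h ⟨i, hi⟩
  simp only at this
  rwa [List.getD_eq_getElem _ _ hi1, List.getD_eq_getElem _ _ hi2] at this

lemma good_of_cons {g0 : ℕ} {l : List ℕ} (hg0 : 0 < g0) (hl : ∀ x ∈ l, 0 < x)
    (hdec : l.Pairwise (· > ·)) : GoodGaps (g0 :: l) := by
  have key : ∀ i j, i < j → j < l.length → l.getD j 0 < l.getD i 0 := by
    intro i j hij hj
    rw [List.getD_eq_getElem _ _ hj, List.getD_eq_getElem _ _ (by omega)]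
    exact List.pairwise_iff_get.mp hdec ⟨i, by omega⟩ ⟨j, hj⟩ hij
  constructor
  · intro g hg
    rcases List.mem_cons.mp hg with rfl | hg
    · exact hg0
    · exact hl g hg
  · intro s hs1 hs2
    obtain ⟨k, rfl⟩ : ∃ k, s = k + 1 := ⟨s - 1, by omega⟩
    rw [List.getD_cons_succ, List.getD_cons_succ]
    simp only [List.length_cons] at hs2
    exact key k (k+1) (by omega) (by omega)

lemma sqrt_sum_bound {n : ℕ} (hn : 10 ≤ n) :
    ∀ S : Finset ℕ, S ⊆ Finset.Icc 1 (Nat.sqrt n) → S.sum id + Nat.sqrt n < n := by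
  set m := Nat.sqrt n with hm
  have hmm : m * m ≤ n := Nat.sqrt_le n
  have h3m : 3 * m < n := by
    rcases le_or_gt m 3 with h | h
    · omega
    · nlinarith
  intro S hS
  have h1 : S.sum id ≤ (Finset.range (m+1)).sum id := by
    apply Finset.sum_le_sum_of_subset
    intro x hx
    have := hS hx
    simp only [Finset.mem_Icc] at this
    simp [Finset.mem_range]; omega
  have h2 : ((Finset.range (m+1)).sum id) * 2 = (m+1) * m := by
    simpa [id] using Finset.sum_range_id_mul_two (m+1)
  nlinarith

lemma c_lower {n : ℕ} (hn : 10 ≤ n) : 2 ^ Nat.sqrt n ≤ c n := by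
  classical
  set m := Nat.sqrt n with hm
  have := finite_c n
  have hsum_bound := sqrt_sum_bound hn
  set ψ : Finset ℕ → List Bool :=
    fun S => mkw false ((n - S.sum id) :: (S.sort (· ≤ ·)).reverse) with hψ
  have htail : ∀ S : Finset ℕ, S ⊆ Finset.Icc 1 m →
      ∀ x ∈ (S.sort (· ≤ ·)).reverse, 0 < x := by
    intro S hS x hx
    rw [List.mem_reverse, Finset.mem_sort] at hx
    have := hS hx; simp at this; omega
  have hgood : ∀ S : Finset ℕ, S ⊆ Finset.Icc 1 m →
      GoodGaps ((n - S.sum id) :: (S.sort (· ≤ ·)).reverse) := by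
    intro S hS
    exact good_of_cons (by have := hsum_bound S hS; omega) (htail S hS) (descList_sorted S)
  have hmem : ∀ S : Finset ℕ, S ⊆ Finset.Icc 1 m → (ψ S).length = n ∧ AvoidsP (ψ S) := by
    intro S hS
    constructor
    · rw [hψ]
      simp only [mkw_length, List.sum_cons, descList_sum]
      have := hsum_bound S hS; omega
    · exact avoid_of_H _ (mkw_H1 (hgood S hS) false) (mkw_H2 (hgood S hS) false)
  have hinj : Set.InjOn ψ {S | S ⊆ Finset.Icc 1 m} := by
    intro S1 hS1 S2 hS2 h
    have hgaps := mkw_inj (hgood S1 hS1).1 (hgood S2 hS2).1 false h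
    have htl : (S1.sort (· ≤ ·)).reverse = (S2.sort (· ≤ ·)).reverse :=
      congrArg List.tail hgaps
    have h2 : S1.sort (· ≤ ·) = S2.sort (· ≤ ·) := by
      simpa using congrArg List.reverse htl
    have := congrArg List.toFinset h2
    simpa [Finset.sort_toFinset] using this
  have key : Nat.card {S : Finset ℕ // S ∈ (Finset.Icc 1 m).powerset} ≤ c n := by
    apply Nat.card_le_card_of_injective
      (f := fun S => (⟨ψ S.1, (hmem S.1 (Finset.mem_powerset.mp S.2)).1,
        (hmem S.1 (Finset.mem_powerset.mp S.2)).2⟩ : {w : List Bool // w.length = n ∧ AvoidsP w}))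
    intro a b hab
    apply Subtype.ext
    exact hinj (Finset.mem_powerset.mp a.2) (Finset.mem_powerset.mp b.2)
      (congrArg Subtype.val hab)
  calc 2 ^ m = ((Finset.Icc 1 m).powerset).card := by
        simp [Finset.card_powerset]
    _ = Nat.card {S : Finset ℕ // S ∈ (Finset.Icc 1 m).powerset} := by
        rw [Nat.card_eq_finsetCard]
    _ ≤ c n := key


/-- `v(n)` (and hence `c(n)`) grows faster than any polynomial. -/
theorem stmt10 :
    (∀ d : ℕ, Filter.Tendsto (fun n : ℕ => (v n : ℝ) / (n : ℝ) ^ d)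
      Filter.atTop Filter.atTop) ∧
    (∀ d : ℕ, Filter.Tendsto (fun n : ℕ => (c n : ℝ) / (n : ℝ) ^ d)
      Filter.atTop Filter.atTop) := by
  constructor
  · intro d
    exact growth_main v (fun n hn => v_lower hn) d
  · intro d
    exact growth_main c (fun n hn => c_lower hn) d
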